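/- Under hypotheses (i)–(iii), for every T > 0 and every square-integrable function f : ℝ → ℂ with support contained in [−T, T], the Bochner integrals ∫ f(t) · i[N_{[−L,0]}, α_t(H_{[−M,M+1]})] dt exist and the iterated limit lim_{M→∞} lim_{L→∞} ∫ f(t) · i[N_{[−L,0]}, α_t(H_{[−M,M+1]})] dt exists in the norm of A and equals √(2π) · f̂(0) · j_{0,1}, where f̂(ε) := (1/√(2π)) ∫ f(t) e^{iεt} dt, so that √(2π)·f̂(0) = ∫ f(t) dt. (Since [a − c·1, b − d·1] = [a, b] for scalars c, d, subtracting expectation values from N and H does not change the commutator, so this is the statement of Lemma 2.) -/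

import Mathlib

open MeasureTheory Filter

set_option linter.unusedSectionVars false
namespace L2aux

variable {A : Type*} [NormedRing A] [StarRing A] [NormedAlgebra ℂ A] [CompleteSpace A]

noncomputable def NL (n : ℤ → A) (L : ℤ) : A := ∑ x ∈ Finset.Icc (-L) 0, n x
noncomputable def HM (h : ℤ → A) (M : ℤ) : A := ∑ y ∈ Finset.Icc (-M) M, h y
def jj (n h : ℤ → A) (z : ℤ) : A := Complex.I • (n z * h z - h z * n z)
def JJ (h : ℤ → A) (x : ℤ) : A := Complex.I • (h (x - 1) * h x - h x * h (x - 1))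
def Jd (h : ℤ → A) (M : ℤ) : A := JJ h (-M) - JJ h (M + 1)
def Dn (n h : ℤ → A) (L : ℤ) : A := jj n h (-L - 1) - jj n h 0
noncomputable def cc (n h : ℤ → A) (α : ℝ → A ≃⋆ₐ[ℂ] A) (L M : ℤ) (t : ℝ) : A :=
  Complex.I • (NL n L * α t (HM h M) - α t (HM h M) * NL n L)

variable {n h : ℤ → A}

lemma comm_sum (N : A) (s : Finset ℤ) (g : ℤ → A) :
    N * (∑ x ∈ s, g x) - (∑ x ∈ s, g x) * N = ∑ x ∈ s, (N * g x - g x * N) := by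
  rw [Finset.mul_sum, Finset.sum_mul, ← Finset.sum_sub_distrib]

lemma commN_expand (L y : ℤ) :
    NL n L * h y - h y * NL n L = ∑ x ∈ Finset.Icc (-L) 0, (n x * h y - h y * n x) := by
  rw [NL, Finset.sum_mul, Finset.mul_sum, ← Finset.sum_sub_distrib]

lemma commN_mid (hloc1 : ∀ x y : ℤ, x ≠ y → x ≠ y + 1 → n x * h y - h y * n x = 0)
    (hcons : ∀ y : ℤ, (n y + n (y + 1)) * h y - h y * (n y + n (y + 1)) = 0)
    (L y : ℤ) (h1 : -L ≤ y) (h2 : y ≤ -1) :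
    NL n L * h y - h y * NL n L = 0 := by
  rw [commN_expand]
  have hsub : ({y, y + 1} : Finset ℤ) ⊆ Finset.Icc (-L) 0 := by
    intro x hx
    simp only [Finset.mem_insert, Finset.mem_singleton] at hx
    simp only [Finset.mem_Icc]
    omega
  rw [← Finset.sum_subset hsub (by
    intro x hx hnx
    simp only [Finset.mem_insert, Finset.mem_singleton] at hnx
    push_neg at hnx
    exact hloc1 x y hnx.1 hnx.2)]
  rw [Finset.sum_insert (by simp only [Finset.mem_singleton]; omega), Finset.sum_singleton]
  have e : (n y * h y - h y * n y) + (n (y + 1) * h y - h y * n (y + 1))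
      = (n y + n (y + 1)) * h y - h y * (n y + n (y + 1)) := by noncomm_ring
  rw [e, hcons y]

lemma commN_right (hloc1 : ∀ x y : ℤ, x ≠ y → x ≠ y + 1 → n x * h y - h y * n x = 0)
    (L y : ℤ) (h1 : 1 ≤ y) :
    NL n L * h y - h y * NL n L = 0 := by
  rw [commN_expand]
  apply Finset.sum_eq_zero
  intro x hx
  simp only [Finset.mem_Icc] at hx
  exact hloc1 x y (by omega) (by omega)

lemma commN_zero (hloc1 : ∀ x y : ℤ, x ≠ y → x ≠ y + 1 → n x * h y - h y * n x = 0)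
    (L : ℤ) (hL : 1 ≤ L) :
    NL n L * h 0 - h 0 * NL n L = n 0 * h 0 - h 0 * n 0 := by
  rw [commN_expand]
  rw [Finset.sum_eq_single_of_mem 0 (by simp only [Finset.mem_Icc]; omega)]
  intro x hx hne
  simp only [Finset.mem_Icc] at hx
  exact hloc1 x 0 hne (by omega)

lemma comm_NL_HM (hloc1 : ∀ x y : ℤ, x ≠ y → x ≠ y + 1 → n x * h y - h y * n x = 0)
    (hcons : ∀ y : ℤ, (n y + n (y + 1)) * h y - h y * (n y + n (y + 1)) = 0)
    (M L : ℤ) (hM : 1 ≤ M) (hL : M ≤ L) :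
    NL n L * HM h M - HM h M * NL n L = n 0 * h 0 - h 0 * n 0 := by
  rw [HM, comm_sum]
  rw [Finset.sum_eq_single_of_mem 0 (by simp only [Finset.mem_Icc]; omega)]
  · exact commN_zero hloc1 L (by omega)
  · intro y hy hne
    simp only [Finset.mem_Icc] at hy
    rcases lt_or_ge y 0 with hy0 | hy0
    · exact commN_mid hloc1 hcons L y (by omega) (by omega)
    · exact commN_right hloc1 L y (by omega)

lemma comm_prod_zero (N a b : A) (ha : N * a - a * N = 0) (hb : N * b - b * N = 0) :
    N * (a * b - b * a) - (a * b - b * a) * N = 0 := by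
  have h1 : N * (a * b) - (a * b) * N = (N * a - a * N) * b + a * (N * b - b * N) := by
    noncomm_ring
  have h2 : N * (b * a) - (b * a) * N = (N * b - b * N) * a + b * (N * a - a * N) := by
    noncomm_ring
  have h3 : N * (a * b - b * a) - (a * b - b * a) * N
      = (N * (a * b) - (a * b) * N) - (N * (b * a) - (b * a) * N) := by noncomm_ring
  rw [h3, h1, h2, ha, hb]
  simp

lemma comm_smul_sub (N : A) (r : ℂ) (a b : A) (ha : N * a - a * N = 0)
    (hb : N * b - b * N = 0) :
    N * (r • a - r • b) - (r • a - r • b) * N = 0 := by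
  have : N * (r • a - r • b) - (r • a - r • b) * N
      = r • (N * a - a * N) - r • (N * b - b * N) := by
    simp only [mul_sub, sub_mul, mul_smul_comm, smul_mul_assoc, smul_sub]
    abel
  rw [this, ha, hb]
  simp

lemma comm_NL_Jd (hloc1 : ∀ x y : ℤ, x ≠ y → x ≠ y + 1 → n x * h y - h y * n x = 0)
    (hcons : ∀ y : ℤ, (n y + n (y + 1)) * h y - h y * (n y + n (y + 1)) = 0)
    (M L : ℤ) (hM : 1 ≤ M) (hL : M + 1 ≤ L) :
    NL n L * Jd h M - Jd h M * NL n L = 0 := by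
  have d1 : NL n L * h (-M - 1) - h (-M - 1) * NL n L = 0 :=
    commN_mid hloc1 hcons L (-M - 1) (by omega) (by omega)
  have d2 : NL n L * h (-M) - h (-M) * NL n L = 0 :=
    commN_mid hloc1 hcons L (-M) (by omega) (by omega)
  have d3 : NL n L * h M - h M * NL n L = 0 := commN_right hloc1 L M hM
  have d4 : NL n L * h (M + 1) - h (M + 1) * NL n L = 0 :=
    commN_right hloc1 L (M + 1) (by omega)
  have e : (M + 1 - 1 : ℤ) = M := by ring
  simp only [Jd, JJ, e]
  exact comm_smul_sub _ _ _ _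
    (comm_prod_zero _ _ _ d1 d2) (comm_prod_zero _ _ _ d3 d4)

variable {n h : ℤ → A} {α : ℝ → A ≃⋆ₐ[ℂ] A}

lemma alpha_inv (hα0 : ∀ a : A, α 0 a = a)
    (hαadd : ∀ (s t : ℝ) (a : A), α (s + t) a = α s (α t a)) (t : ℝ) (a : A) :
    α t (α (-t) a) = a := by
  rw [← hαadd, add_neg_cancel, hα0]

lemma key_conj (hα0 : ∀ a : A, α 0 a = a)
    (hαadd : ∀ (s t : ℝ) (a : A), α (s + t) a = α s (α t a)) (s : ℝ) (a b : A) :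
    a * α s b - α s b * a = α s (α (-s) a * b - b * α (-s) a) := by
  rw [map_sub, map_mul, map_mul, alpha_inv hα0 hαadd]

lemma II {g : ℝ → A} (hg : StronglyMeasurable g) (B : ℝ) (hB : ∀ u, ‖g u‖ ≤ B)
    (a b : ℝ) : IntervalIntegrable g volume a b := by
  rw [intervalIntegrable_iff]
  refine Integrable.mono' (g := fun _ => B) ?_ hg.aestronglyMeasurable.restrict
    (ae_of_all _ hB)
  exact integrableOn_const measure_Ioc_lt_top.ne

lemma abs_le_of_mem_uIoc {u s : ℝ} (hu : u ∈ Set.uIoc 0 s) : |u| ≤ |s| := by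
  rcases le_total 0 s with hs | hs
  · rw [Set.uIoc_of_le hs] at hu
    rw [abs_of_nonneg hs, abs_of_nonneg hu.1.le]
    exact hu.2
  · rw [Set.uIoc_of_ge hs] at hu
    rw [abs_of_nonpos hs, abs_of_nonpos hu.2]
    linarith [hu.1]

-- derivative facts
lemma derivH
    (hdiffH : ∀ M : ℤ, 1 ≤ M → ∀ t : ℝ,
      HasDerivAt (fun s : ℝ => α s (∑ y ∈ Finset.Icc (-M) M, h y))
        (α t (Complex.I • (h (-M - 1) * h (-M) - h (-M) * h (-M - 1))
          - Complex.I • (h M * h (M + 1) - h (M + 1) * h M))) t)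
    (M : ℤ) (hM : 1 ≤ M) (t : ℝ) :
    HasDerivAt (fun s : ℝ => α s (HM h M)) (α t (Jd h M)) t := by
  have e : (M + 1 - 1 : ℤ) = M := by ring
  simp only [Jd, JJ, e]
  exact hdiffH M hM t

lemma smJ
    (hdiffH : ∀ M : ℤ, 1 ≤ M → ∀ t : ℝ,
      HasDerivAt (fun s : ℝ => α s (∑ y ∈ Finset.Icc (-M) M, h y))
        (α t (Complex.I • (h (-M - 1) * h (-M) - h (-M) * h (-M - 1))
          - Complex.I • (h M * h (M + 1) - h (M + 1) * h M))) t)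
    (M : ℤ) (hM : 1 ≤ M) :
    StronglyMeasurable (fun s : ℝ => α s (Jd h M)) := by
  have : (fun s : ℝ => α s (Jd h M)) = deriv (fun s : ℝ => α s (HM h M)) := by
    funext t
    exact ((derivH hdiffH M hM t).deriv).symm
  rw [this]
  exact stronglyMeasurable_deriv _

lemma derivN
    (hdiffN : ∀ L : ℤ, 1 ≤ L → ∀ t : ℝ,
      HasDerivAt (fun s : ℝ => α s (∑ x ∈ Finset.Icc (-L) 0, n x))
        (α t (Complex.I • (n (-L - 1) * h (-L - 1) - h (-L - 1) * n (-L - 1))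
          - Complex.I • (n 0 * h 0 - h 0 * n 0))) t)
    (L : ℤ) (hL : 1 ≤ L) (t : ℝ) :
    HasDerivAt (fun s : ℝ => α s (NL n L)) (α t (Dn n h L)) t :=
  hdiffN L hL t

lemma smD
    (hdiffN : ∀ L : ℤ, 1 ≤ L → ∀ t : ℝ,
      HasDerivAt (fun s : ℝ => α s (∑ x ∈ Finset.Icc (-L) 0, n x))
        (α t (Complex.I • (n (-L - 1) * h (-L - 1) - h (-L - 1) * n (-L - 1))
          - Complex.I • (n 0 * h 0 - h 0 * n 0))) t)
    (L : ℤ) (hL : 1 ≤ L) :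
    StronglyMeasurable (fun u : ℝ => α (-u) (Dn n h L)) := by
  have h1 : (fun s : ℝ => α s (Dn n h L)) = deriv (fun s : ℝ => α s (NL n L)) := by
    funext t
    exact ((derivN hdiffN L hL t).deriv).symm
  have h2 : StronglyMeasurable (fun s : ℝ => α s (Dn n h L)) := by
    rw [h1]; exact stronglyMeasurable_deriv _
  exact h2.comp_measurable measurable_neg

lemma derivNneg
    (hdiffN : ∀ L : ℤ, 1 ≤ L → ∀ t : ℝ,
      HasDerivAt (fun s : ℝ => α s (∑ x ∈ Finset.Icc (-L) 0, n x))
        (α t (Complex.I • (n (-L - 1) * h (-L - 1) - h (-L - 1) * n (-L - 1))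
          - Complex.I • (n 0 * h 0 - h 0 * n 0))) t)
    (L : ℤ) (hL : 1 ≤ L) (u : ℝ) :
    HasDerivAt (fun u : ℝ => α (-u) (NL n L)) (-(α (-u) (Dn n h L))) u := by
  have h1 := (derivN hdiffN L hL (-u)).scomp u (hasDerivAt_neg u)
  simp at h1
  exact h1


lemma norm_comm_le (a b : A) : ‖a * b - b * a‖ ≤ ‖a‖ * ‖b‖ + ‖b‖ * ‖a‖ :=
  (norm_sub_le _ _).trans (add_le_add (norm_mul_le _ _) (norm_mul_le _ _))

lemma keyPhi
    (hα0 : ∀ a : A, α 0 a = a)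
    (hαadd : ∀ (s t : ℝ) (a : A), α (s + t) a = α s (α t a))
    (hαiso : ∀ (t : ℝ) (a : A), ‖α t a‖ = ‖a‖)
    (hloc1 : ∀ x y : ℤ, x ≠ y → x ≠ y + 1 → n x * h y - h y * n x = 0)
    (hcons : ∀ y : ℤ, (n y + n (y + 1)) * h y - h y * (n y + n (y + 1)) = 0)
    (hdiffN : ∀ L : ℤ, 1 ≤ L → ∀ t : ℝ,
      HasDerivAt (fun s : ℝ => α s (∑ x ∈ Finset.Icc (-L) 0, n x))
        (α t (Complex.I • (n (-L - 1) * h (-L - 1) - h (-L - 1) * n (-L - 1))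
          - Complex.I • (n 0 * h 0 - h 0 * n 0))) t)
    (M : ℤ) (hM : 1 ≤ M) (L : ℤ) (hL : M + 1 ≤ L) (s : ℝ) :
    NL n L * α s (Jd h M) - α s (Jd h M) * NL n L
      = α s (-(∫ u in (0:ℝ)..s,
          (α (-u) (Dn n h L) * Jd h M - Jd h M * α (-u) (Dn n h L)))) := by
  have hL1 : (1 : ℤ) ≤ L := by omega
  have hder : ∀ u : ℝ, HasDerivAt
      (fun u : ℝ => α (-u) (NL n L) * Jd h M - Jd h M * α (-u) (NL n L))
      (-(α (-u) (Dn n h L) * Jd h M - Jd h M * α (-u) (Dn n h L))) u := by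
    intro u
    have h1 := ((derivNneg hdiffN L hL1 u).mul_const (Jd h M)).sub
      ((derivNneg hdiffN L hL1 u).const_mul (Jd h M))
    exact h1.congr_deriv (by noncomm_ring)
  have hint : IntervalIntegrable
      (fun u : ℝ => -(α (-u) (Dn n h L) * Jd h M - Jd h M * α (-u) (Dn n h L)))
      volume 0 s := by
    refine II (g := fun u : ℝ => -(α (-u) (Dn n h L) * Jd h M - Jd h M * α (-u) (Dn n h L)))
      ((((smD hdiffN L hL1).mul_const (Jd h M)).sub
        ((smD hdiffN L hL1).const_mul (Jd h M))).neg)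
      (‖Dn n h L‖ * ‖Jd h M‖ + ‖Jd h M‖ * ‖Dn n h L‖) (fun u => ?_) 0 s
    rw [norm_neg]
    have := norm_comm_le (α (-u) (Dn n h L)) (Jd h M)
    rwa [hαiso] at this
  have hftc := intervalIntegral.integral_eq_sub_of_hasDerivAt (fun u _ => hder u) hint
  have h2 : (∫ u in (0:ℝ)..s,
        -(α (-u) (Dn n h L) * Jd h M - Jd h M * α (-u) (Dn n h L)))
      = α (-s) (NL n L) * Jd h M - Jd h M * α (-s) (NL n L) := by
    rw [hftc]
    simp only [neg_zero, hα0]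
    rw [comm_NL_Jd hloc1 hcons M L hM hL, sub_zero]
  rw [key_conj hα0 hαadd]
  congr 1
  rw [← h2, intervalIntegral.integral_neg]

lemma derivc
    (hdiffH : ∀ M : ℤ, 1 ≤ M → ∀ t : ℝ,
      HasDerivAt (fun s : ℝ => α s (∑ y ∈ Finset.Icc (-M) M, h y))
        (α t (Complex.I • (h (-M - 1) * h (-M) - h (-M) * h (-M - 1))
          - Complex.I • (h M * h (M + 1) - h (M + 1) * h M))) t)
    (M : ℤ) (hM : 1 ≤ M) (L : ℤ) (t : ℝ) :
    HasDerivAt (cc n h α L M)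
      (Complex.I • (NL n L * α t (Jd h M) - α t (Jd h M) * NL n L)) t := by
  have h1 := (((derivH hdiffH M hM t).const_mul (NL n L)).sub
    ((derivH hdiffH M hM t).mul_const (NL n L))).const_smul Complex.I
  exact h1

lemma keyc
    (hα0 : ∀ a : A, α 0 a = a)
    (hαiso : ∀ (t : ℝ) (a : A), ‖α t a‖ = ‖a‖)
    (hloc1 : ∀ x y : ℤ, x ≠ y → x ≠ y + 1 → n x * h y - h y * n x = 0)
    (hcons : ∀ y : ℤ, (n y + n (y + 1)) * h y - h y * (n y + n (y + 1)) = 0)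
    (hdiffH : ∀ M : ℤ, 1 ≤ M → ∀ t : ℝ,
      HasDerivAt (fun s : ℝ => α s (∑ y ∈ Finset.Icc (-M) M, h y))
        (α t (Complex.I • (h (-M - 1) * h (-M) - h (-M) * h (-M - 1))
          - Complex.I • (h M * h (M + 1) - h (M + 1) * h M))) t)
    (M : ℤ) (hM : 1 ≤ M) (L : ℤ) (hL : M + 1 ≤ L) (t : ℝ) :
    cc n h α L M t = jj n h 0 + ∫ s in (0:ℝ)..t,
      Complex.I • (NL n L * α s (Jd h M) - α s (Jd h M) * NL n L) := by
  have hint : IntervalIntegrable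
      (fun s : ℝ => Complex.I • (NL n L * α s (Jd h M) - α s (Jd h M) * NL n L))
      volume 0 t := by
    refine II (g := fun s : ℝ => Complex.I • (NL n L * α s (Jd h M) - α s (Jd h M) * NL n L))
      ((((smJ hdiffH M hM).const_mul (NL n L)).sub
        ((smJ hdiffH M hM).mul_const (NL n L))).const_smul Complex.I)
      (‖NL n L‖ * ‖Jd h M‖ + ‖Jd h M‖ * ‖NL n L‖) (fun u => ?_) 0 t
    rw [norm_smul, Complex.norm_I, one_mul]
    refine (norm_sub_le _ _).trans ?_
    refine add_le_add ((norm_mul_le _ _).trans ?_) ((norm_mul_le _ _).trans ?_) <;>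
      rw [hαiso]
  have hftc := intervalIntegral.integral_eq_sub_of_hasDerivAt
    (fun s _ => derivc hdiffH M hM L s) hint
  have h0 : cc n h α L M 0 = jj n h 0 := by
    simp only [cc, hα0]
    rw [comm_NL_HM hloc1 hcons M L hM (by omega)]
    rfl
  rw [hftc, h0]
  abel


section LR
variable {C V T : ℝ}

lemma term_bound
    (hC : 0 ≤ C) (hV : 0 ≤ V) (hT : 0 ≤ T)
    (hLR2 : ∀ (s : ℝ) (x z : ℤ), (6 : ℤ) ≤ |z - x| →
      ‖α s (Complex.I • (n z * h z - h z * n z))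
            * (Complex.I • (h (x - 1) * h x - h x * h (x - 1)))
          - (Complex.I • (h (x - 1) * h x - h x * h (x - 1)))
            * α s (Complex.I • (n z * h z - h z * n z))‖
        ≤ C * Real.exp (-(((|z - x| : ℤ) : ℝ) - 5)) * Real.exp (2 * V * |s|))
    (z x : ℤ) (hzx : (6 : ℤ) ≤ |z - x|) (u : ℝ) (hu : |u| ≤ T) :
    ‖α (-u) (jj n h z) * JJ h x - JJ h x * α (-u) (jj n h z)‖
      ≤ C * Real.exp (-(((|z - x| : ℤ) : ℝ) - 5)) * Real.exp (2 * V * T) := by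
  have h1 := hLR2 (-u) x z hzx
  simp only [jj, JJ]
  refine h1.trans ?_
  have h2 : Real.exp (2 * V * |(-u)|) ≤ Real.exp (2 * V * T) := by
    apply Real.exp_le_exp.2
    rw [abs_neg]
    nlinarith [abs_nonneg u]
  have h0 : 0 ≤ C * Real.exp (-(((|z - x| : ℤ) : ℝ) - 5)) := by positivity
  exact mul_le_mul_of_nonneg_left h2 h0

lemma Jd_term_bound
    (hC : 0 ≤ C) (hV : 0 ≤ V) (hT : 0 ≤ T)
    (hLR2 : ∀ (s : ℝ) (x z : ℤ), (6 : ℤ) ≤ |z - x| →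
      ‖α s (Complex.I • (n z * h z - h z * n z))
            * (Complex.I • (h (x - 1) * h x - h x * h (x - 1)))
          - (Complex.I • (h (x - 1) * h x - h x * h (x - 1)))
            * α s (Complex.I • (n z * h z - h z * n z))‖
        ≤ C * Real.exp (-(((|z - x| : ℤ) : ℝ) - 5)) * Real.exp (2 * V * |s|))
    (M z : ℤ) (h1 : (6 : ℤ) ≤ |z - (-M)|) (h2 : (6 : ℤ) ≤ |z - (M + 1)|)
    (u : ℝ) (hu : |u| ≤ T) :
    ‖α (-u) (jj n h z) * Jd h M - Jd h M * α (-u) (jj n h z)‖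
      ≤ C * Real.exp (-(((|z - (-M)| : ℤ) : ℝ) - 5)) * Real.exp (2 * V * T)
        + C * Real.exp (-(((|z - (M + 1)| : ℤ) : ℝ) - 5)) * Real.exp (2 * V * T) := by
  have e : ∀ a P Q : A, a * (P - Q) - (P - Q) * a = (a * P - P * a) - (a * Q - Q * a) := by
    intros; noncomm_ring
  rw [Jd, e]
  exact (norm_sub_le _ _).trans (add_le_add
    (term_bound hC hV hT hLR2 z (-M) h1 u hu)
    (term_bound hC hV hT hLR2 z (M + 1) h2 u hu))

lemma hbL
    (hC : 0 ≤ C) (hV : 0 ≤ V) (hT : 0 ≤ T)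
    (hLR2 : ∀ (s : ℝ) (x z : ℤ), (6 : ℤ) ≤ |z - x| →
      ‖α s (Complex.I • (n z * h z - h z * n z))
            * (Complex.I • (h (x - 1) * h x - h x * h (x - 1)))
          - (Complex.I • (h (x - 1) * h x - h x * h (x - 1)))
            * α s (Complex.I • (n z * h z - h z * n z))‖
        ≤ C * Real.exp (-(((|z - x| : ℤ) : ℝ) - 5)) * Real.exp (2 * V * |s|))
    (M : ℤ) (hM : 1 ≤ M) (L : ℤ) (hL : M + 5 ≤ L) (u : ℝ) (hu : |u| ≤ T) :
    ‖α (-u) (jj n h (-L - 1)) * Jd h M - Jd h M * α (-u) (jj n h (-L - 1))‖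
      ≤ 2 * (C * Real.exp (2 * V * T)) * Real.exp (-((L : ℝ) - M - 4)) := by
  have e1 : |(-L - 1) - (-M)| = L + 1 - M := by
    rw [abs_of_nonpos (by omega)]; ring
  have e2 : |(-L - 1) - (M + 1)| = L + M + 2 := by
    rw [abs_of_nonpos (by omega)]; ring
  have hb := Jd_term_bound hC hV hT hLR2 M (-L - 1) (by omega) (by omega) u hu
  rw [e1, e2] at hb
  refine hb.trans ?_
  push_cast
  have hM' : (1 : ℝ) ≤ (M : ℝ) := by exact_mod_cast hM
  have k1 : -(((L : ℝ) + 1 - M) - 5) = -((L : ℝ) - M - 4) := by ring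
  have k2 : Real.exp (-(((L : ℝ) + M + 2) - 5)) ≤ Real.exp (-((L : ℝ) - M - 4)) := by
    apply Real.exp_le_exp.2; linarith
  rw [k1]
  have hE : 0 ≤ C * Real.exp (2 * V * T) := by positivity
  nlinarith [Real.exp_pos (-((L : ℝ) - M - 4)), mul_le_mul_of_nonneg_left k2 hC,
    Real.exp_pos (2 * V * T)]

lemma hb0
    (hC : 0 ≤ C) (hV : 0 ≤ V) (hT : 0 ≤ T)
    (hLR2 : ∀ (s : ℝ) (x z : ℤ), (6 : ℤ) ≤ |z - x| →
      ‖α s (Complex.I • (n z * h z - h z * n z))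
            * (Complex.I • (h (x - 1) * h x - h x * h (x - 1)))
          - (Complex.I • (h (x - 1) * h x - h x * h (x - 1)))
            * α s (Complex.I • (n z * h z - h z * n z))‖
        ≤ C * Real.exp (-(((|z - x| : ℤ) : ℝ) - 5)) * Real.exp (2 * V * |s|))
    (M : ℤ) (hM : 6 ≤ M) (u : ℝ) (hu : |u| ≤ T) :
    ‖α (-u) (jj n h 0) * Jd h M - Jd h M * α (-u) (jj n h 0)‖
      ≤ 2 * (C * Real.exp (2 * V * T)) * Real.exp (-((M : ℝ) - 5)) := by
  have e1 : |(0 : ℤ) - (-M)| = M := by rw [abs_of_nonneg (by omega)]; ring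
  have e2 : |(0 : ℤ) - (M + 1)| = M + 1 := by rw [abs_of_nonpos (by omega)]; ring
  have hb := Jd_term_bound hC hV hT hLR2 M 0 (by omega) (by omega) u hu
  rw [e1, e2] at hb
  refine hb.trans ?_
  push_cast
  have k2 : Real.exp (-(((M : ℝ) + 1) - 5)) ≤ Real.exp (-((M : ℝ) - 5)) := by
    apply Real.exp_le_exp.2; linarith
  nlinarith [Real.exp_pos (-((M : ℝ) - 5)), mul_le_mul_of_nonneg_left k2 hC,
    Real.exp_pos (2 * V * T)]

end LR

lemma comm_sub_left (a b J : A) :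
    (a - b) * J - J * (a - b) = (a * J - J * a) - (b * J - J * b) := by noncomm_ring

lemma intD
    (hαiso : ∀ (t : ℝ) (a : A), ‖α t a‖ = ‖a‖)
    (hdiffN : ∀ L : ℤ, 1 ≤ L → ∀ t : ℝ,
      HasDerivAt (fun s : ℝ => α s (∑ x ∈ Finset.Icc (-L) 0, n x))
        (α t (Complex.I • (n (-L - 1) * h (-L - 1) - h (-L - 1) * n (-L - 1))
          - Complex.I • (n 0 * h 0 - h 0 * n 0))) t)
    (M L : ℤ) (hL : 1 ≤ L) (a b : ℝ) :
    IntervalIntegrable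
      (fun u : ℝ => α (-u) (Dn n h L) * Jd h M - Jd h M * α (-u) (Dn n h L))
      volume a b := by
  refine II (g := fun u : ℝ => α (-u) (Dn n h L) * Jd h M - Jd h M * α (-u) (Dn n h L))
    (((smD hdiffN L hL).mul_const (Jd h M)).sub ((smD hdiffN L hL).const_mul (Jd h M)))
    (‖Dn n h L‖ * ‖Jd h M‖ + ‖Jd h M‖ * ‖Dn n h L‖) (fun u => ?_) a b
  have := norm_comm_le (α (-u) (Dn n h L)) (Jd h M)
  rwa [hαiso] at this

lemma intJ
    (hαiso : ∀ (t : ℝ) (a : A), ‖α t a‖ = ‖a‖)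
    (hdiffH : ∀ M : ℤ, 1 ≤ M → ∀ t : ℝ,
      HasDerivAt (fun s : ℝ => α s (∑ y ∈ Finset.Icc (-M) M, h y))
        (α t (Complex.I • (h (-M - 1) * h (-M) - h (-M) * h (-M - 1))
          - Complex.I • (h M * h (M + 1) - h (M + 1) * h M))) t)
    (M : ℤ) (hM : 1 ≤ M) (L : ℤ) (a b : ℝ) :
    IntervalIntegrable
      (fun s : ℝ => Complex.I • (NL n L * α s (Jd h M) - α s (Jd h M) * NL n L))
      volume a b := by
  refine II (g := fun s : ℝ => Complex.I • (NL n L * α s (Jd h M) - α s (Jd h M) * NL n L))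
    ((((smJ hdiffH M hM).const_mul (NL n L)).sub
      ((smJ hdiffH M hM).mul_const (NL n L))).const_smul Complex.I)
    (‖NL n L‖ * ‖Jd h M‖ + ‖Jd h M‖ * ‖NL n L‖) (fun u => ?_) a b
  rw [norm_smul, Complex.norm_I, one_mul]
  refine (norm_sub_le _ _).trans
    (add_le_add ((norm_mul_le _ _).trans ?_) ((norm_mul_le _ _).trans ?_)) <;> rw [hαiso]

lemma Phi_norm_lim
    (hα0 : ∀ a : A, α 0 a = a)
    (hαadd : ∀ (s t : ℝ) (a : A), α (s + t) a = α s (α t a))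
    (hαiso : ∀ (t : ℝ) (a : A), ‖α t a‖ = ‖a‖)
    (hloc1 : ∀ x y : ℤ, x ≠ y → x ≠ y + 1 → n x * h y - h y * n x = 0)
    (hcons : ∀ y : ℤ, (n y + n (y + 1)) * h y - h y * (n y + n (y + 1)) = 0)
    (hdiffH : ∀ M : ℤ, 1 ≤ M → ∀ t : ℝ,
      HasDerivAt (fun s : ℝ => α s (∑ y ∈ Finset.Icc (-M) M, h y))
        (α t (Complex.I • (h (-M - 1) * h (-M) - h (-M) * h (-M - 1))
          - Complex.I • (h M * h (M + 1) - h (M + 1) * h M))) t)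
    (hdiffN : ∀ L : ℤ, 1 ≤ L → ∀ t : ℝ,
      HasDerivAt (fun s : ℝ => α s (∑ x ∈ Finset.Icc (-L) 0, n x))
        (α t (Complex.I • (n (-L - 1) * h (-L - 1) - h (-L - 1) * n (-L - 1))
          - Complex.I • (n 0 * h 0 - h 0 * n 0))) t)
    (hC : 0 ≤ C) (hV : 0 ≤ V) (hT : 0 ≤ T)
    (hLR2 : ∀ (s : ℝ) (x z : ℤ), (6 : ℤ) ≤ |z - x| →
      ‖α s (Complex.I • (n z * h z - h z * n z))
            * (Complex.I • (h (x - 1) * h x - h x * h (x - 1)))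
          - (Complex.I • (h (x - 1) * h x - h x * h (x - 1)))
            * α s (Complex.I • (n z * h z - h z * n z))‖
        ≤ C * Real.exp (-(((|z - x| : ℤ) : ℝ) - 5)) * Real.exp (2 * V * |s|))
    (M : ℤ) (hM : 6 ≤ M) (L : ℤ) (hL : M + 5 ≤ L) (s : ℝ) (hs : |s| ≤ T) :
    ‖NL n L * α s (Jd h M) - α s (Jd h M) * NL n L‖
      ≤ (2 * (C * Real.exp (2 * V * T)) * Real.exp (-((L : ℝ) - M - 4))
          + 2 * (C * Real.exp (2 * V * T)) * Real.exp (-((M : ℝ) - 5))) * T := by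
  have hM1 : (1 : ℤ) ≤ M := by omega
  rw [keyPhi hα0 hαadd hαiso hloc1 hcons hdiffN M hM1 L (by omega) s, hαiso, norm_neg]
  refine (intervalIntegral.norm_integral_le_of_norm_le_const (C :=
      2 * (C * Real.exp (2 * V * T)) * Real.exp (-((L : ℝ) - M - 4))
        + 2 * (C * Real.exp (2 * V * T)) * Real.exp (-((M : ℝ) - 5)))
      (fun u hu => ?_)).trans ?_
  · have hu' : |u| ≤ T := (abs_le_of_mem_uIoc hu).trans hs
    have e1 : α (-u) (Dn n h L) = α (-u) (jj n h (-L - 1)) - α (-u) (jj n h 0) := by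
      rw [Dn, map_sub]
    rw [e1, comm_sub_left]
    exact (norm_sub_le _ _).trans (add_le_add
      (hbL hC hV hT hLR2 M hM1 L hL u hu')
      (hb0 hC hV hT hLR2 M hM u hu'))
  · rw [sub_zero]
    have h0 : 0 ≤ 2 * (C * Real.exp (2 * V * T)) * Real.exp (-((L : ℝ) - M - 4))
        + 2 * (C * Real.exp (2 * V * T)) * Real.exp (-((M : ℝ) - 5)) := by positivity
    exact mul_le_mul_of_nonneg_left hs h0

lemma Phi_norm_diff
    (hα0 : ∀ a : A, α 0 a = a)
    (hαadd : ∀ (s t : ℝ) (a : A), α (s + t) a = α s (α t a))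
    (hαiso : ∀ (t : ℝ) (a : A), ‖α t a‖ = ‖a‖)
    (hloc1 : ∀ x y : ℤ, x ≠ y → x ≠ y + 1 → n x * h y - h y * n x = 0)
    (hcons : ∀ y : ℤ, (n y + n (y + 1)) * h y - h y * (n y + n (y + 1)) = 0)
    (hdiffH : ∀ M : ℤ, 1 ≤ M → ∀ t : ℝ,
      HasDerivAt (fun s : ℝ => α s (∑ y ∈ Finset.Icc (-M) M, h y))
        (α t (Complex.I • (h (-M - 1) * h (-M) - h (-M) * h (-M - 1))
          - Complex.I • (h M * h (M + 1) - h (M + 1) * h M))) t)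
    (hdiffN : ∀ L : ℤ, 1 ≤ L → ∀ t : ℝ,
      HasDerivAt (fun s : ℝ => α s (∑ x ∈ Finset.Icc (-L) 0, n x))
        (α t (Complex.I • (n (-L - 1) * h (-L - 1) - h (-L - 1) * n (-L - 1))
          - Complex.I • (n 0 * h 0 - h 0 * n 0))) t)
    (hC : 0 ≤ C) (hV : 0 ≤ V) (hT : 0 ≤ T)
    (hLR2 : ∀ (s : ℝ) (x z : ℤ), (6 : ℤ) ≤ |z - x| →
      ‖α s (Complex.I • (n z * h z - h z * n z))
            * (Complex.I • (h (x - 1) * h x - h x * h (x - 1)))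
          - (Complex.I • (h (x - 1) * h x - h x * h (x - 1)))
            * α s (Complex.I • (n z * h z - h z * n z))‖
        ≤ C * Real.exp (-(((|z - x| : ℤ) : ℝ) - 5)) * Real.exp (2 * V * |s|))
    (M : ℤ) (hM : 1 ≤ M) (L L' : ℤ) (hL : M + 5 ≤ L) (hL' : M + 5 ≤ L')
    (s : ℝ) (hs : |s| ≤ T) :
    ‖(NL n L * α s (Jd h M) - α s (Jd h M) * NL n L)
        - (NL n L' * α s (Jd h M) - α s (Jd h M) * NL n L')‖
      ≤ (2 * (C * Real.exp (2 * V * T)) * Real.exp (-((L : ℝ) - M - 4))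
          + 2 * (C * Real.exp (2 * V * T)) * Real.exp (-((L' : ℝ) - M - 4))) * T := by
  rw [keyPhi hα0 hαadd hαiso hloc1 hcons hdiffN M hM L (by omega) s,
    keyPhi hα0 hαadd hαiso hloc1 hcons hdiffN M hM L' (by omega) s,
    ← map_sub, hαiso, neg_sub_neg,
    ← intervalIntegral.integral_sub (intD hαiso hdiffN M L' (by omega) 0 s)
      (intD hαiso hdiffN M L (by omega) 0 s)]
  refine (intervalIntegral.norm_integral_le_of_norm_le_const (C :=
      2 * (C * Real.exp (2 * V * T)) * Real.exp (-((L : ℝ) - M - 4))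
        + 2 * (C * Real.exp (2 * V * T)) * Real.exp (-((L' : ℝ) - M - 4)))
      (fun u hu => ?_)).trans ?_
  · have hu' : |u| ≤ T := (abs_le_of_mem_uIoc hu).trans hs
    have e1 : (α (-u) (Dn n h L') * Jd h M - Jd h M * α (-u) (Dn n h L'))
        - (α (-u) (Dn n h L) * Jd h M - Jd h M * α (-u) (Dn n h L))
        = ((α (-u) (Dn n h L') - α (-u) (Dn n h L)) * Jd h M
            - Jd h M * (α (-u) (Dn n h L') - α (-u) (Dn n h L))) := by noncomm_ring
    have e2 : α (-u) (Dn n h L') - α (-u) (Dn n h L)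
        = α (-u) (jj n h (-L' - 1)) - α (-u) (jj n h (-L - 1)) := by
      rw [← map_sub, Dn, Dn, sub_sub_sub_cancel_right, map_sub]
    rw [e1, e2, comm_sub_left]
    rw [add_comm (2 * (C * Real.exp (2 * V * T)) * Real.exp (-((L : ℝ) - M - 4)))]
    exact (norm_sub_le _ _).trans (add_le_add
      (hbL hC hV hT hLR2 M hM L' hL' u hu')
      (hbL hC hV hT hLR2 M hM L hL u hu'))
  · rw [sub_zero]
    have h0 : 0 ≤ 2 * (C * Real.exp (2 * V * T)) * Real.exp (-((L : ℝ) - M - 4))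
        + 2 * (C * Real.exp (2 * V * T)) * Real.exp (-((L' : ℝ) - M - 4)) := by positivity
    exact mul_le_mul_of_nonneg_left hs h0

lemma cc_norm_lim
    (hα0 : ∀ a : A, α 0 a = a)
    (hαadd : ∀ (s t : ℝ) (a : A), α (s + t) a = α s (α t a))
    (hαiso : ∀ (t : ℝ) (a : A), ‖α t a‖ = ‖a‖)
    (hloc1 : ∀ x y : ℤ, x ≠ y → x ≠ y + 1 → n x * h y - h y * n x = 0)
    (hcons : ∀ y : ℤ, (n y + n (y + 1)) * h y - h y * (n y + n (y + 1)) = 0)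
    (hdiffH : ∀ M : ℤ, 1 ≤ M → ∀ t : ℝ,
      HasDerivAt (fun s : ℝ => α s (∑ y ∈ Finset.Icc (-M) M, h y))
        (α t (Complex.I • (h (-M - 1) * h (-M) - h (-M) * h (-M - 1))
          - Complex.I • (h M * h (M + 1) - h (M + 1) * h M))) t)
    (hdiffN : ∀ L : ℤ, 1 ≤ L → ∀ t : ℝ,
      HasDerivAt (fun s : ℝ => α s (∑ x ∈ Finset.Icc (-L) 0, n x))
        (α t (Complex.I • (n (-L - 1) * h (-L - 1) - h (-L - 1) * n (-L - 1))
          - Complex.I • (n 0 * h 0 - h 0 * n 0))) t)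
    (hC : 0 ≤ C) (hV : 0 ≤ V) (hT : 0 ≤ T)
    (hLR2 : ∀ (s : ℝ) (x z : ℤ), (6 : ℤ) ≤ |z - x| →
      ‖α s (Complex.I • (n z * h z - h z * n z))
            * (Complex.I • (h (x - 1) * h x - h x * h (x - 1)))
          - (Complex.I • (h (x - 1) * h x - h x * h (x - 1)))
            * α s (Complex.I • (n z * h z - h z * n z))‖
        ≤ C * Real.exp (-(((|z - x| : ℤ) : ℝ) - 5)) * Real.exp (2 * V * |s|))
    (M : ℤ) (hM : 6 ≤ M) (L : ℤ) (hL : M + 5 ≤ L) (t : ℝ) (ht : |t| ≤ T) :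
    ‖cc n h α L M t - jj n h 0‖
      ≤ ((2 * (C * Real.exp (2 * V * T)) * Real.exp (-((L : ℝ) - M - 4))
          + 2 * (C * Real.exp (2 * V * T)) * Real.exp (-((M : ℝ) - 5))) * T) * T := by
  have hM1 : (1 : ℤ) ≤ M := by omega
  rw [keyc hα0 hαiso hloc1 hcons hdiffH M hM1 L (by omega) t, add_sub_cancel_left]
  refine (intervalIntegral.norm_integral_le_of_norm_le_const (C :=
      (2 * (C * Real.exp (2 * V * T)) * Real.exp (-((L : ℝ) - M - 4))
        + 2 * (C * Real.exp (2 * V * T)) * Real.exp (-((M : ℝ) - 5))) * T)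
      (fun u hu => ?_)).trans ?_
  · have hu' : |u| ≤ T := (abs_le_of_mem_uIoc hu).trans ht
    rw [norm_smul, Complex.norm_I, one_mul]
    exact Phi_norm_lim hα0 hαadd hαiso hloc1 hcons hdiffH hdiffN hC hV hT hLR2
      M hM L hL u hu'
  · rw [sub_zero]
    have h0 : 0 ≤ (2 * (C * Real.exp (2 * V * T)) * Real.exp (-((L : ℝ) - M - 4))
        + 2 * (C * Real.exp (2 * V * T)) * Real.exp (-((M : ℝ) - 5))) * T := by positivity
    exact mul_le_mul_of_nonneg_left ht h0

lemma cc_norm_diff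
    (hα0 : ∀ a : A, α 0 a = a)
    (hαadd : ∀ (s t : ℝ) (a : A), α (s + t) a = α s (α t a))
    (hαiso : ∀ (t : ℝ) (a : A), ‖α t a‖ = ‖a‖)
    (hloc1 : ∀ x y : ℤ, x ≠ y → x ≠ y + 1 → n x * h y - h y * n x = 0)
    (hcons : ∀ y : ℤ, (n y + n (y + 1)) * h y - h y * (n y + n (y + 1)) = 0)
    (hdiffH : ∀ M : ℤ, 1 ≤ M → ∀ t : ℝ,
      HasDerivAt (fun s : ℝ => α s (∑ y ∈ Finset.Icc (-M) M, h y))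
        (α t (Complex.I • (h (-M - 1) * h (-M) - h (-M) * h (-M - 1))
          - Complex.I • (h M * h (M + 1) - h (M + 1) * h M))) t)
    (hdiffN : ∀ L : ℤ, 1 ≤ L → ∀ t : ℝ,
      HasDerivAt (fun s : ℝ => α s (∑ x ∈ Finset.Icc (-L) 0, n x))
        (α t (Complex.I • (n (-L - 1) * h (-L - 1) - h (-L - 1) * n (-L - 1))
          - Complex.I • (n 0 * h 0 - h 0 * n 0))) t)
    (hC : 0 ≤ C) (hV : 0 ≤ V) (hT : 0 ≤ T)
    (hLR2 : ∀ (s : ℝ) (x z : ℤ), (6 : ℤ) ≤ |z - x| →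
      ‖α s (Complex.I • (n z * h z - h z * n z))
            * (Complex.I • (h (x - 1) * h x - h x * h (x - 1)))
          - (Complex.I • (h (x - 1) * h x - h x * h (x - 1)))
            * α s (Complex.I • (n z * h z - h z * n z))‖
        ≤ C * Real.exp (-(((|z - x| : ℤ) : ℝ) - 5)) * Real.exp (2 * V * |s|))
    (M : ℤ) (hM : 1 ≤ M) (L L' : ℤ) (hL : M + 5 ≤ L) (hL' : M + 5 ≤ L')
    (t : ℝ) (ht : |t| ≤ T) :
    ‖cc n h α L M t - cc n h α L' M t‖
      ≤ ((2 * (C * Real.exp (2 * V * T)) * Real.exp (-((L : ℝ) - M - 4))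
          + 2 * (C * Real.exp (2 * V * T)) * Real.exp (-((L' : ℝ) - M - 4))) * T) * T := by
  rw [keyc hα0 hαiso hloc1 hcons hdiffH M hM L (by omega) t,
    keyc hα0 hαiso hloc1 hcons hdiffH M hM L' (by omega) t,
    add_sub_add_left_eq_sub,
    ← intervalIntegral.integral_sub (intJ hαiso hdiffH M hM L 0 t)
      (intJ hαiso hdiffH M hM L' 0 t)]
  refine (intervalIntegral.norm_integral_le_of_norm_le_const (C :=
      (2 * (C * Real.exp (2 * V * T)) * Real.exp (-((L : ℝ) - M - 4))
        + 2 * (C * Real.exp (2 * V * T)) * Real.exp (-((L' : ℝ) - M - 4))) * T)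
      (fun u hu => ?_)).trans ?_
  · have hu' : |u| ≤ T := (abs_le_of_mem_uIoc hu).trans ht
    rw [← smul_sub, norm_smul, Complex.norm_I, one_mul]
    exact Phi_norm_diff hα0 hαadd hαiso hloc1 hcons hdiffH hdiffN hC hV hT hLR2
      M hM L L' hL hL' u hu'
  · rw [sub_zero]
    have h0 : 0 ≤ (2 * (C * Real.exp (2 * V * T)) * Real.exp (-((L : ℝ) - M - 4))
        + 2 * (C * Real.exp (2 * V * T)) * Real.exp (-((L' : ℝ) - M - 4))) * T := by positivity
    exact mul_le_mul_of_nonneg_left ht h0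

end L2aux



open L2aux

/-- Lemma 2: under locality, charge conservation, the
differentiability hypotheses (i)-(ii) and the Lieb-Robinson bounds (iii), for
every `T > 0` and square-integrable `f` supported in `[-T,T]`, the integrals
`∫ f(t) · i[N_{[-L,0]}, α_t(H_{[-M,M+1]})] dt` exist, and the iterated limit
`lim_{M→∞} lim_{L→∞}` of them exists in norm and equals
`√(2π) · f̂(0) · j_{0,1}`. -/
theorem lemma_two_nonvanishing_current
    (A : Type*) [NormedRing A] [StarRing A] [CStarRing A] [NormedAlgebra ℂ A]
    [CompleteSpace A]
    (n h : ℤ → A)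
    -- locality of charge and interaction
    (hloc1 : ∀ x y : ℤ, x ≠ y → x ≠ y + 1 → n x * h y - h y * n x = 0)
    (hloc2 : ∀ x y : ℤ, 2 ≤ |x - y| → h x * h y - h y * h x = 0)
    -- local charge conservation
    (hcons : ∀ y : ℤ, (n y + n (y + 1)) * h y - h y * (n y + n (y + 1)) = 0)
    -- one-parameter group of isometric *-automorphisms
    (α : ℝ → A ≃⋆ₐ[ℂ] A)
    (hα0 : ∀ a : A, α 0 a = a)
    (hαadd : ∀ (s t : ℝ) (a : A), α (s + t) a = α s (α t a))
    (hαiso : ∀ (t : ℝ) (a : A), ‖α t a‖ = ‖a‖)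
    -- (i) derivative of t ↦ α_t(H_{[-M,M+1]}) is α_t(J_{-M} - J_{M+1})
    (hdiffH : ∀ M : ℤ, 1 ≤ M → ∀ t : ℝ,
      HasDerivAt (fun s : ℝ => α s (∑ y ∈ Finset.Icc (-M) M, h y))
        (α t (Complex.I • (h (-M - 1) * h (-M) - h (-M) * h (-M - 1))
          - Complex.I • (h M * h (M + 1) - h (M + 1) * h M))) t)
    -- (ii) derivative of t ↦ α_t(N_{[-L,0]}) is α_t(j_{-L-1,-L} - j_{0,1})
    (hdiffN : ∀ L : ℤ, 1 ≤ L → ∀ t : ℝ,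
      HasDerivAt (fun s : ℝ => α s (∑ x ∈ Finset.Icc (-L) 0, n x))
        (α t (Complex.I • (n (-L - 1) * h (-L - 1) - h (-L - 1) * n (-L - 1))
          - Complex.I • (n 0 * h 0 - h 0 * n 0))) t)
    -- (iii) Lieb-Robinson bounds
    (hLR : ∃ C > (0 : ℝ), ∃ V > (0 : ℝ), ∀ (s : ℝ) (x z : ℤ),
      ((5 : ℤ) ≤ |z - x| →
        ‖n z * α s (Complex.I • (h (x - 1) * h x - h x * h (x - 1)))
            - α s (Complex.I • (h (x - 1) * h x - h x * h (x - 1))) * n z‖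
          ≤ C * Real.exp (-(((|z - x| : ℤ) : ℝ) - 4)) * Real.exp (2 * V * |s|)) ∧
      ((6 : ℤ) ≤ |z - x| →
        ‖α s (Complex.I • (n z * h z - h z * n z))
              * (Complex.I • (h (x - 1) * h x - h x * h (x - 1)))
            - (Complex.I • (h (x - 1) * h x - h x * h (x - 1)))
              * α s (Complex.I • (n z * h z - h z * n z))‖
          ≤ C * Real.exp (-(((|z - x| : ℤ) : ℝ) - 5)) * Real.exp (2 * V * |s|))) :
    ∀ T > (0 : ℝ), ∀ f : ℝ → ℂ, MemLp f 2 (volume : Measure ℝ) →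
      Function.support f ⊆ Set.Icc (-T) T →
      (∀ M L : ℤ, 1 ≤ M → 1 ≤ L →
        Integrable (fun t : ℝ => f t • (Complex.I •
          ((∑ x ∈ Finset.Icc (-L) 0, n x) * α t (∑ y ∈ Finset.Icc (-M) M, h y)
            - α t (∑ y ∈ Finset.Icc (-M) M, h y) * ∑ x ∈ Finset.Icc (-L) 0, n x)))
          (volume : Measure ℝ)) ∧
      ∃ g : ℤ → A,
        (∀ M : ℤ, 1 ≤ M →
          Tendsto (fun L : ℤ => ∫ t : ℝ, f t • (Complex.I •
            ((∑ x ∈ Finset.Icc (-L) 0, n x) * α t (∑ y ∈ Finset.Icc (-M) M, h y)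
              - α t (∑ y ∈ Finset.Icc (-M) M, h y) * ∑ x ∈ Finset.Icc (-L) 0, n x)))
            atTop (nhds (g M))) ∧
        Tendsto g atTop (nhds
          (((Real.sqrt (2 * Real.pi) : ℂ)
              * ((1 / (Real.sqrt (2 * Real.pi) : ℂ))
                * ∫ t : ℝ, f t * Complex.exp (Complex.I * (0 : ℝ) * t)))
            • (Complex.I • (n 0 * h 0 - h 0 * n 0)))) := by
  intro T hT f hf hsupp
  obtain ⟨C, hC, V, hV, hLRb⟩ := hLR
  have hLR2 := fun (s : ℝ) (x z : ℤ) => (hLRb s x z).2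
  have hC0 : (0 : ℝ) ≤ C := hC.le
  have hV0 : (0 : ℝ) ≤ V := hV.le
  have hT0 : (0 : ℝ) ≤ T := hT.le
  -- continuity
  have hcontH : ∀ M : ℤ, 1 ≤ M → Continuous (fun t : ℝ => α t (HM h M)) := by
    intro M hM
    exact continuous_iff_continuousAt.mpr fun t => (derivH hdiffH M hM t).continuousAt
  have hcontc : ∀ (L M : ℤ), 1 ≤ M → Continuous (cc n h α L M) := by
    intro L M hM
    exact ((continuous_const.mul (hcontH M hM)).sub
      ((hcontH M hM).mul continuous_const)).const_smul Complex.I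
  -- integrability of f
  have hfint : Integrable f (volume : Measure ℝ) := by
    refine memLp_one_iff_integrable.mp ?_
    refine hf.mono_exponent_of_measure_support_ne_top
      (s := Set.Icc (-T) T) (fun x hx => ?_) ?_ (by norm_num)
    · by_contra hfx
      exact hx (hsupp (Function.mem_support.2 hfx))
    · rw [Real.volume_Icc]; exact ENNReal.ofReal_ne_top
  -- support vanishing
  have hfzero : ∀ t : ℝ, ¬ |t| ≤ T → f t = 0 := by
    intro t ht
    by_contra hfx
    exact ht (abs_le.2 (Set.mem_Icc.1 (hsupp (Function.mem_support.2 hfx))))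
  -- integrability of the integrand
  have hIble : ∀ (M L : ℤ), 1 ≤ M → 1 ≤ L →
      Integrable (fun t : ℝ => f t • cc n h α L M t) (volume : Measure ℝ) := by
    intro M L hM hL
    refine Integrable.mono'
      (hfint.norm.mul_const (‖NL n L‖ * ‖HM h M‖ + ‖HM h M‖ * ‖NL n L‖))
      (hf.aestronglyMeasurable.smul (hcontc L M hM).aestronglyMeasurable)
      (ae_of_all _ fun t => ?_)
    rw [norm_smul]
    refine mul_le_mul_of_nonneg_left ?_ (norm_nonneg (f t))
    rw [cc, norm_smul, Complex.norm_I, one_mul]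
    refine (norm_sub_le _ _).trans
      (add_le_add ((norm_mul_le _ _).trans ?_) ((norm_mul_le _ _).trans ?_)) <;>
      rw [hαiso]
  constructor
  · intro M L hM hL
    exact hIble M L hM hL
  -- Part 2
  have hKf0 : 0 ≤ ∫ t : ℝ, ‖f t‖ := integral_nonneg fun t => norm_nonneg _
  -- bound on the difference of integrals
  have hIdiff : ∀ M : ℤ, 1 ≤ M → ∀ L L' : ℤ, M + 5 ≤ L → M + 5 ≤ L' →
      ‖(∫ t : ℝ, f t • cc n h α L M t) - ∫ t : ℝ, f t • cc n h α L' M t‖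
        ≤ (∫ t : ℝ, ‖f t‖) *
          (((2 * (C * Real.exp (2 * V * T)) * Real.exp (-((L : ℝ) - M - 4))
            + 2 * (C * Real.exp (2 * V * T)) * Real.exp (-((L' : ℝ) - M - 4))) * T) * T) := by
    intro M hM L L' hL hL'
    have hB0 : 0 ≤ ((2 * (C * Real.exp (2 * V * T)) * Real.exp (-((L : ℝ) - M - 4))
        + 2 * (C * Real.exp (2 * V * T)) * Real.exp (-((L' : ℝ) - M - 4))) * T) * T := by
      positivity
    rw [← integral_sub (hIble M L hM (by omega)) (hIble M L' hM (by omega))]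
    have heq : (fun t : ℝ => f t • cc n h α L M t - f t • cc n h α L' M t)
        = fun t : ℝ => f t • (cc n h α L M t - cc n h α L' M t) := by
      funext t; rw [smul_sub]
    rw [heq]
    calc ‖∫ t : ℝ, f t • (cc n h α L M t - cc n h α L' M t)‖
        ≤ ∫ t : ℝ, ‖f t • (cc n h α L M t - cc n h α L' M t)‖ :=
          norm_integral_le_integral_norm _
      _ ≤ ∫ t : ℝ, ‖f t‖ *
          (((2 * (C * Real.exp (2 * V * T)) * Real.exp (-((L : ℝ) - M - 4))
            + 2 * (C * Real.exp (2 * V * T)) * Real.exp (-((L' : ℝ) - M - 4))) * T) * T) := by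
          refine integral_mono ?_ ?_ (fun t => ?_)
          · have h7 : Integrable (fun t : ℝ => f t • (cc n h α L M t - cc n h α L' M t))
                (volume : Measure ℝ) := by
              rw [← heq]
              exact (hIble M L hM (by omega)).sub (hIble M L' hM (by omega))
            exact h7.norm
          · exact hfint.norm.mul_const _
          · rw [norm_smul]
            by_cases ht : |t| ≤ T
            · exact mul_le_mul_of_nonneg_left
                (cc_norm_diff hα0 hαadd hαiso hloc1 hcons hdiffH hdiffN hC0 hV0 hT0 hLR2
                  M hM L L' hL hL' t ht) (norm_nonneg (f t))
            · rw [hfzero t ht]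
              simp [hB0]
      _ = (∫ t : ℝ, ‖f t‖) * _ := integral_mul_const _ _
  -- limit value
  have hIlim : ∀ M : ℤ, 6 ≤ M → ∀ L : ℤ, M + 5 ≤ L →
      ‖(∫ t : ℝ, f t • cc n h α L M t) - (∫ t : ℝ, f t) • jj n h 0‖
        ≤ (∫ t : ℝ, ‖f t‖) *
          (((2 * (C * Real.exp (2 * V * T)) * Real.exp (-((L : ℝ) - M - 4))
            + 2 * (C * Real.exp (2 * V * T)) * Real.exp (-((M : ℝ) - 5))) * T) * T) := by
    intro M hM L hL
    have hM1 : (1 : ℤ) ≤ M := by omega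
    have hB0 : 0 ≤ ((2 * (C * Real.exp (2 * V * T)) * Real.exp (-((L : ℝ) - M - 4))
        + 2 * (C * Real.exp (2 * V * T)) * Real.exp (-((M : ℝ) - 5))) * T) * T := by
      positivity
    rw [← integral_smul_const, ← integral_sub (hIble M L hM1 (by omega))
      (hfint.smul_const (jj n h 0))]
    have heq : (fun t : ℝ => f t • cc n h α L M t - f t • jj n h 0)
        = fun t : ℝ => f t • (cc n h α L M t - jj n h 0) := by
      funext t; rw [smul_sub]
    rw [heq]
    calc ‖∫ t : ℝ, f t • (cc n h α L M t - jj n h 0)‖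
        ≤ ∫ t : ℝ, ‖f t • (cc n h α L M t - jj n h 0)‖ :=
          norm_integral_le_integral_norm _
      _ ≤ ∫ t : ℝ, ‖f t‖ *
          (((2 * (C * Real.exp (2 * V * T)) * Real.exp (-((L : ℝ) - M - 4))
            + 2 * (C * Real.exp (2 * V * T)) * Real.exp (-((M : ℝ) - 5))) * T) * T) := by
          refine integral_mono ?_ ?_ (fun t => ?_)
          · have h7 : Integrable (fun t : ℝ => f t • (cc n h α L M t - jj n h 0))
                (volume : Measure ℝ) := by
              rw [← heq]
              exact (hIble M L hM1 (by omega)).sub (hfint.smul_const (jj n h 0))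
            exact h7.norm
          · exact hfint.norm.mul_const _
          · rw [norm_smul]
            by_cases ht : |t| ≤ T
            · exact mul_le_mul_of_nonneg_left
                (cc_norm_lim hα0 hαadd hαiso hloc1 hcons hdiffH hdiffN hC0 hV0 hT0 hLR2
                  M hM L hL t ht) (norm_nonneg (f t))
            · rw [hfzero t ht]
              simp [hB0]
      _ = (∫ t : ℝ, ‖f t‖) * _ := integral_mul_const _ _
  -- exponential decay
  have hexp : ∀ b : ℝ, Tendsto (fun N : ℤ => Real.exp (-((N : ℝ) - b))) atTop (nhds 0) := by
    intro b
    apply Real.tendsto_exp_atBot.comp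
    have h1 : Tendsto (fun N : ℤ => ((N : ℝ) - b)) atTop atTop := by
      apply tendsto_atTop_add_const_right
      exact tendsto_intCast_atTop_atTop
    exact (tendsto_neg_atTop_atBot).comp h1
  -- Cauchy / existence of limits
  have hconv : ∀ M : ℤ, 1 ≤ M → ∃ gM : A,
      Tendsto (fun L : ℤ => ∫ t : ℝ, f t • cc n h α L M t) atTop (nhds gM) := by
    intro M hM
    apply cauchySeq_tendsto_of_complete
    rw [Metric.cauchySeq_iff]
    intro ε hε
    have h5 : Tendsto (fun N : ℤ =>
        (∫ t : ℝ, ‖f t‖) * (T * T) * (4 * (C * Real.exp (2 * V * T)))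
          * Real.exp (-((N : ℝ) - ((M : ℝ) + 4)))) atTop (nhds 0) := by
      simpa using (hexp ((M : ℝ) + 4)).const_mul
        ((∫ t : ℝ, ‖f t‖) * (T * T) * (4 * (C * Real.exp (2 * V * T))))
    obtain ⟨N, hN⟩ := ((h5.eventually_lt_const hε).and (eventually_ge_atTop (M + 5))).exists
    refine ⟨N, fun L hLN L' hL'N => ?_⟩
    have m1 : Real.exp (-((L : ℝ) - M - 4)) ≤ Real.exp (-((N : ℝ) - ((M : ℝ) + 4))) := by
      apply Real.exp_le_exp.2
      have : (N : ℝ) ≤ L := by exact_mod_cast hLN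
      linarith
    have m2 : Real.exp (-((L' : ℝ) - M - 4)) ≤ Real.exp (-((N : ℝ) - ((M : ℝ) + 4))) := by
      apply Real.exp_le_exp.2
      have : (N : ℝ) ≤ L' := by exact_mod_cast hL'N
      linarith
    have key := hIdiff M hM L L' (by omega) (by omega)
    rw [dist_eq_norm]
    calc ‖(∫ t : ℝ, f t • cc n h α L M t) - ∫ t : ℝ, f t • cc n h α L' M t‖
        ≤ (∫ t : ℝ, ‖f t‖) *
          (((2 * (C * Real.exp (2 * V * T)) * Real.exp (-((L : ℝ) - M - 4))
            + 2 * (C * Real.exp (2 * V * T)) * Real.exp (-((L' : ℝ) - M - 4))) * T) * T) := key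
      _ = (∫ t : ℝ, ‖f t‖) * (T * T) * (2 * (C * Real.exp (2 * V * T)))
            * (Real.exp (-((L : ℝ) - M - 4)) + Real.exp (-((L' : ℝ) - M - 4))) := by ring
      _ ≤ (∫ t : ℝ, ‖f t‖) * (T * T) * (2 * (C * Real.exp (2 * V * T)))
            * (Real.exp (-((N : ℝ) - ((M : ℝ) + 4))) + Real.exp (-((N : ℝ) - ((M : ℝ) + 4)))) := by
          have h0 : 0 ≤ (∫ t : ℝ, ‖f t‖) * (T * T) * (2 * (C * Real.exp (2 * V * T))) := by
            positivity
          exact mul_le_mul_of_nonneg_left (add_le_add m1 m2) h0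
      _ = (∫ t : ℝ, ‖f t‖) * (T * T) * (4 * (C * Real.exp (2 * V * T)))
            * Real.exp (-((N : ℝ) - ((M : ℝ) + 4))) := by ring
      _ < ε := hN.1
  choose g0 hg0 using hconv
  refine ⟨fun M => if hM : 1 ≤ M then g0 M hM else 0, fun M hM => ?_, ?_⟩
  · simp only [dif_pos hM]
    exact hg0 M hM
  · -- identify the limit value
    have hne : ((Real.sqrt (2 * Real.pi) : ℝ) : ℂ) ≠ 0 := by
      refine Complex.ofReal_ne_zero.2 ?_
      have : 0 < Real.sqrt (2 * Real.pi) := Real.sqrt_pos.2 (by positivity)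
      exact this.ne'
    have hexp0 : ∀ t : ℝ, Complex.exp (Complex.I * ((0 : ℝ) : ℂ) * t) = 1 := by
      intro t
      simp
    have hsc : ((Real.sqrt (2 * Real.pi) : ℂ)
        * ((1 / (Real.sqrt (2 * Real.pi) : ℂ))
          * ∫ t : ℝ, f t * Complex.exp (Complex.I * (0 : ℝ) * t))) = ∫ t : ℝ, f t := by
      simp only [hexp0, mul_one]
      rw [← mul_assoc, mul_one_div, div_self hne, one_mul]
    have hSeq : (((Real.sqrt (2 * Real.pi) : ℂ)
        * ((1 / (Real.sqrt (2 * Real.pi) : ℂ))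
          * ∫ t : ℝ, f t * Complex.exp (Complex.I * (0 : ℝ) * t)))
        • (Complex.I • (n 0 * h 0 - h 0 * n 0)))
        = (∫ t : ℝ, f t) • jj n h 0 := by
      rw [hsc]
      rfl
    rw [hSeq]
    -- squeeze argument
    have hgS : ∀ M : ℤ, 6 ≤ M →
        ‖(if hM : 1 ≤ M then g0 M hM else 0) - (∫ t : ℝ, f t) • jj n h 0‖
          ≤ (∫ t : ℝ, ‖f t‖) * (T * T) * (2 * (C * Real.exp (2 * V * T)))
            * Real.exp (-((M : ℝ) - 5)) := by
      intro M hM6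
      have hM : (1 : ℤ) ≤ M := by omega
      have e : (if hM' : 1 ≤ M then g0 M hM' else 0) = g0 M hM := dif_pos hM
      rw [e]
      have h1 : Tendsto (fun L : ℤ => ‖(∫ t : ℝ, f t • cc n h α L M t)
          - (∫ t : ℝ, f t) • jj n h 0‖) atTop
          (nhds ‖g0 M hM - (∫ t : ℝ, f t) • jj n h 0‖) :=
        ((hg0 M hM).sub_const _).norm
      have h2 : Tendsto (fun L : ℤ =>
          (∫ t : ℝ, ‖f t‖) *
            (((2 * (C * Real.exp (2 * V * T)) * Real.exp (-((L : ℝ) - M - 4))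
              + 2 * (C * Real.exp (2 * V * T)) * Real.exp (-((M : ℝ) - 5))) * T) * T))
          atTop (nhds ((∫ t : ℝ, ‖f t‖) *
            (((2 * (C * Real.exp (2 * V * T)) * 0
              + 2 * (C * Real.exp (2 * V * T)) * Real.exp (-((M : ℝ) - 5))) * T) * T))) := by
        apply Tendsto.const_mul
        apply Tendsto.mul_const
        apply Tendsto.mul_const
        apply Tendsto.add_const
        apply Tendsto.const_mul
        have e2 : (fun L : ℤ => Real.exp (-((L : ℝ) - M - 4)))
            = fun L : ℤ => Real.exp (-((L : ℝ) - ((M : ℝ) + 4))) := by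
          funext L; ring_nf
        rw [e2]
        exact hexp ((M : ℝ) + 4)
      have h3 : ∀ᶠ L : ℤ in atTop,
          ‖(∫ t : ℝ, f t • cc n h α L M t) - (∫ t : ℝ, f t) • jj n h 0‖
            ≤ (∫ t : ℝ, ‖f t‖) *
              (((2 * (C * Real.exp (2 * V * T)) * Real.exp (-((L : ℝ) - M - 4))
                + 2 * (C * Real.exp (2 * V * T)) * Real.exp (-((M : ℝ) - 5))) * T) * T) :=
        eventually_atTop.2 ⟨M + 5, fun L hL => hIlim M hM6 L hL⟩
      exact (le_of_tendsto_of_tendsto h1 h2 h3).trans (le_of_eq (by ring))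
    have h4 : Tendsto (fun M : ℤ =>
        ‖(if hM : 1 ≤ M then g0 M hM else 0) - (∫ t : ℝ, f t) • jj n h 0‖)
        atTop (nhds 0) := by
      refine squeeze_zero' (Eventually.of_forall fun M => norm_nonneg _)
        (eventually_atTop.2 ⟨6, fun M hM6 => hgS M hM6⟩) ?_
      simpa using (hexp 5).const_mul
        ((∫ t : ℝ, ‖f t‖) * (T * T) * (2 * (C * Real.exp (2 * V * T))))
    exact tendsto_iff_norm_sub_tendsto_zero.mpr h4
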